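/- For any n points p₀, p₁, ..., p_{n-1} in the open unit ball B^n ⊂ ℂⁿ, there exists a holomorphic automorphism of B^n that is not the identity but fixes all n points. (Equivalently, no set of n points in B^n is a determining set for Aut(B^n).) -/

import Mathlib

open Metric Set Submodule Module

private lemma aux_scalar (c lam : ℂ) :
    2 * (((1 - (starRingEnd ℂ) c * c) * (2*(c - lam)) * (starRingEnd ℂ) lam).re)
      + ‖(2:ℂ)*(c-lam)‖^2
    = ‖1 + (starRingEnd ℂ) c * c - 2*(starRingEnd ℂ) c * lam‖^2 - ((1:ℝ)-‖c‖^2)^2 := by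
  simp only [Complex.sq_norm, Complex.normSq_apply,
    Complex.mul_re, Complex.mul_im, Complex.sub_re, Complex.sub_im,
    Complex.add_re, Complex.add_im, Complex.one_re, Complex.one_im,
    Complex.conj_re, Complex.conj_im, Complex.re_ofNat, Complex.im_ofNat]
  ring

private lemma aux_exists_v (n : ℕ) (hn : 1 ≤ n) (p : Fin n → EuclideanSpace ℂ (Fin n)) :
    ∃ v : EuclideanSpace ℂ (Fin n), ‖v‖ = 1 ∧
      ∀ i, (inner ℂ v (p i) : ℂ) = inner ℂ v (p ⟨0, hn⟩) := by
  classical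
  have h1 : n - 1 + 1 = n := Nat.succ_pred_eq_of_pos hn
  set g : Fin (n-1) → EuclideanSpace ℂ (Fin n) :=
    fun j => p (Fin.cast h1 j.succ) - p ⟨0, hn⟩ with hg
  have hlt : Submodule.span ℂ (Set.range g) < ⊤ := by
    apply span_lt_top_of_card_lt_finrank
    calc (Set.range g).toFinset.card ≤ Fintype.card (Fin (n-1)) := by
          rw [Set.toFinset_card]; exact Fintype.card_range_le g
      _ < finrank ℂ (EuclideanSpace ℂ (Fin n)) := by
          rw [finrank_euclideanSpace_fin]; simp; omega
  have hbot : (Submodule.span ℂ (Set.range g))ᗮ ≠ ⊥ := by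
    rw [Ne, Submodule.orthogonal_eq_bot_iff]
    exact hlt.ne
  obtain ⟨v₀, hv₀mem, hv₀⟩ := Submodule.exists_mem_ne_zero_of_ne_bot hbot
  have hmem : ∀ i, p i - p ⟨0, hn⟩ ∈ Submodule.span ℂ (Set.range g) := by
    intro i
    rcases i with ⟨k, hk⟩
    by_cases hk0 : k = 0
    · subst hk0; simp [sub_self]
    · have : (⟨k, hk⟩ : Fin n) = Fin.cast h1 (Fin.succ ⟨k-1, by omega⟩) := by
        apply Fin.ext; simp; omega
      rw [this]
      exact Submodule.subset_span ⟨⟨k-1, by omega⟩, rfl⟩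
  have h0 : ∀ i, (inner ℂ v₀ (p i - p ⟨0, hn⟩) : ℂ) = 0 := by
    intro i
    rw [inner_eq_zero_symm]
    exact (Submodule.mem_orthogonal _ v₀).mp hv₀mem _ (hmem i)
  refine ⟨((‖v₀‖⁻¹ : ℝ) : ℂ) • v₀, ?_, fun i => ?_⟩
  · rw [norm_smul]
    simp [inv_mul_cancel₀ (norm_ne_zero_iff.mpr hv₀)]
  · have h2 := h0 i
    rw [inner_sub_right, sub_eq_zero] at h2
    rw [inner_smul_left, inner_smul_left, h2]

set_option maxHeartbeats 2000000 in
/-- No `n` points in the open unit ball of `ℂⁿ` form a determining set for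
`Aut(Bⁿ)`: there is a non-identity automorphism of the ball fixing all of them. -/
theorem ball_not_determined_by_n_points (n : ℕ) (hn : 1 ≤ n)
    (p : Fin n → EuclideanSpace ℂ (Fin n))
    (hp : ∀ i, p i ∈ ball (0 : EuclideanSpace ℂ (Fin n)) 1) :
    ∃ f g : EuclideanSpace ℂ (Fin n) → EuclideanSpace ℂ (Fin n),
      DifferentiableOn ℂ f (ball 0 1) ∧
      DifferentiableOn ℂ g (ball 0 1) ∧
      MapsTo f (ball 0 1) (ball 0 1) ∧
      MapsTo g (ball 0 1) (ball 0 1) ∧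
      (∀ z ∈ ball (0 : EuclideanSpace ℂ (Fin n)) 1, g (f z) = z) ∧
      (∀ z ∈ ball (0 : EuclideanSpace ℂ (Fin n)) 1, f (g z) = z) ∧
      (∀ i, f (p i) = p i) ∧
      (∃ z ∈ ball (0 : EuclideanSpace ℂ (Fin n)) 1, f z ≠ z) := by
  classical
  obtain ⟨v, hv1, hvp⟩ := aux_exists_v n hn p
  have hvne : v ≠ 0 := by
    intro h; rw [h, norm_zero] at hv1; norm_num at hv1
  set c : ℂ := inner ℂ v (p ⟨0, hn⟩) with hcdef
  have hc : ‖c‖ < 1 := by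
    calc ‖c‖ ≤ ‖v‖ * ‖p ⟨0, hn⟩‖ := norm_inner_le_norm v _
      _ = ‖p ⟨0, hn⟩‖ := by rw [hv1, one_mul]
      _ < 1 := mem_ball_zero_iff.mp (hp ⟨0, hn⟩)
  set s : ℂ := (starRingEnd ℂ) c * c with hsdef
  have hs : s = ((‖c‖^2 : ℝ) : ℂ) := by
    rw [hsdef, mul_comm, Complex.mul_conj]
    norm_cast
    rw [Complex.sq_norm]
  have hone : ‖(1:ℂ) - s‖ = 1 - ‖c‖^2 := by
    rw [hs]
    have : (1:ℂ) - ((‖c‖^2 : ℝ) : ℂ) = (((1 - ‖c‖^2 : ℝ)) : ℂ) := by push_cast; ring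
    rw [this, Complex.norm_real, Real.norm_of_nonneg (by nlinarith [norm_nonneg c])]
  have hsne : (1:ℂ) - s ≠ 0 := by
    rw [← norm_pos_iff, hone]; nlinarith [norm_nonneg c]
  set d : EuclideanSpace ℂ (Fin n) → ℂ :=
    fun z => 1 + s - 2 * (starRingEnd ℂ) c * inner ℂ v z with hddef
  have hdnorm : ∀ z : EuclideanSpace ℂ (Fin n), ‖(inner ℂ v z : ℂ)‖ < 1 →
      (1 : ℝ) - ‖(inner ℂ v z : ℂ)‖^2 ≤ ‖d z‖ ∧ d z ≠ 0 := by
    intro z hz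
    set lam : ℂ := inner ℂ v z with hlam
    have h1 : ‖(1 : ℂ) + s‖ = 1 + ‖c‖^2 := by
      rw [hs]
      have : (1:ℂ) + ((‖c‖^2 : ℝ) : ℂ) = (((1 + ‖c‖^2 : ℝ)) : ℂ) := by push_cast; ring
      rw [this, Complex.norm_real, Real.norm_of_nonneg (by positivity)]
    have h2 : ‖2 * (starRingEnd ℂ) c * lam‖ = 2 * ‖c‖ * ‖lam‖ := by
      rw [norm_mul, norm_mul]
      simp [RCLike.norm_conj]
    have h3 : ‖(1:ℂ) + s‖ - ‖2 * (starRingEnd ℂ) c * lam‖ ≤ ‖d z‖ :=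
      norm_sub_norm_le _ _
    have h4 : (1:ℝ) - ‖lam‖^2 ≤ 1 + ‖c‖^2 - 2*‖c‖*‖lam‖ := by
      nlinarith [sq_nonneg (‖c‖ - ‖lam‖)]
    have h5 : (0:ℝ) < 1 - ‖lam‖^2 := by nlinarith [norm_nonneg lam]
    rw [h1, h2] at h3
    refine ⟨by linarith, ?_⟩
    rw [← norm_pos_iff]; linarith
  set f : EuclideanSpace ℂ (Fin n) → EuclideanSpace ℂ (Fin n) :=
    fun z => (d z)⁻¹ • ((1 - s) • z + (2 * (c - inner ℂ v z)) • v) with hfdef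
  have hvv : (inner ℂ v v : ℂ) = 1 := by
    rw [inner_self_eq_norm_sq_to_K, hv1]; norm_num
  have hinnerlt : ∀ z : EuclideanSpace ℂ (Fin n), ‖z‖ < 1 → ‖(inner ℂ v z : ℂ)‖ < 1 := by
    intro z hz
    calc ‖(inner ℂ v z : ℂ)‖ ≤ ‖v‖ * ‖z‖ := norm_inner_le_norm v z
      _ = ‖z‖ := by rw [hv1, one_mul]
      _ < 1 := hz
  -- maps to ball
  have hmapsto : MapsTo f (ball 0 1) (ball 0 1) := by
    intro z hz
    rw [mem_ball_zero_iff] at hz ⊢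
    set lam : ℂ := inner ℂ v z with hlamdef
    have hlam : ‖lam‖ ≤ ‖z‖ := by
      calc ‖lam‖ ≤ ‖v‖ * ‖z‖ := norm_inner_le_norm v z
        _ = ‖z‖ := by rw [hv1, one_mul]
    obtain ⟨hd1, hd2⟩ := hdnorm z (lt_of_le_of_lt hlam hz)
    have hzv : (inner ℂ z v : ℂ) = (starRingEnd ℂ) lam := by
      rw [hlamdef, ← inner_conj_symm]
    have hxy : (inner ℂ ((1-s) • z) ((2*(c-lam)) • v) : ℂ)
        = (1 - s) * (2*(c-lam)) * (starRingEnd ℂ) lam := by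
      rw [inner_smul_left, inner_smul_right, hzv]
      have hconj : (starRingEnd ℂ) (1 - s) = 1 - s := by
        rw [hsdef]; simp; ring
      rw [hconj]; ring
    have hnum : ‖(1 - s) • z + (2 * (c - lam)) • v‖^2
        = ‖d z‖^2 - (1 - ‖c‖^2)^2 * (1 - ‖z‖^2) := by
      rw [@norm_add_sq ℂ, hxy, norm_smul, norm_smul, hone, hv1, mul_one]
      have hdz_eq : d z = 1 + (starRingEnd ℂ) c * c - 2*(starRingEnd ℂ) c * lam := rfl
      have key := aux_scalar c lam
      rw [← hsdef] at key
      rw [hdz_eq, ← hsdef]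
      simp only [RCLike.re_to_complex]
      nlinarith [key]
    have hdpos : 0 < ‖d z‖ := norm_pos_iff.mpr hd2
    have hfzsq : ‖f z‖^2 = (‖d z‖⁻¹)^2 * (‖d z‖^2 - (1-‖c‖^2)^2*(1-‖z‖^2)) := by
      rw [hfdef]
      simp only []
      rw [norm_smul, norm_inv, mul_pow, hnum]
    have hA : 0 < (1-‖c‖^2)^2*(1-‖z‖^2) :=
      mul_pos (pow_pos (by nlinarith [norm_nonneg c]) 2) (by nlinarith [norm_nonneg z])
    have h5 : ‖d z‖⁻¹ ^2 * ‖d z‖^2 = 1 := by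
      rw [← mul_pow, inv_mul_cancel₀ (ne_of_gt hdpos), one_pow]
    have hlt1 : ‖f z‖^2 < 1 := by
      rw [hfzsq, mul_sub, h5]
      have := mul_pos (pow_pos (inv_pos.mpr hdpos) 2) hA
      linarith
    nlinarith [hlt1, norm_nonneg (f z)]
  -- expansion lemma
  have hexp : ∀ w, f w = ((d w)⁻¹ * (1 - s)) • w
      + ((d w)⁻¹ * (2 * (c - inner ℂ v w))) • v := by
    intro w
    rw [hfdef]
    simp only []
    rw [smul_add, smul_smul, smul_smul]
  -- involution on the ball
  have hinv : ∀ z ∈ ball (0 : EuclideanSpace ℂ (Fin n)) 1, f (f z) = z := by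
    intro z hz
    rw [mem_ball_zero_iff] at hz
    set lam : ℂ := inner ℂ v z with hlamdef
    have hdz_ne : d z ≠ 0 := (hdnorm z (hinnerlt z hz)).2
    have hfzball : ‖f z‖ < 1 := mem_ball_zero_iff.mp (hmapsto (mem_ball_zero_iff.mpr hz))
    have hd'_ne : d (f z) ≠ 0 := (hdnorm (f z) (hinnerlt (f z) hfzball)).2
    have hdz_eq : d z = 1 + s - 2*(starRingEnd ℂ) c * lam := rfl
    have hlam' : (inner ℂ v (f z) : ℂ) = (d z)⁻¹ * ((1 - s) * lam + 2 * (c - lam)) := by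
      rw [hfdef]
      simp only [inner_smul_right, inner_add_right, hvv]
      ring
    have h2' : (inner ℂ v (f z) : ℂ) * d z = (1 - s) * lam + 2 * (c - lam) := by
      rw [hlam', mul_comm ((d z)⁻¹) ((1 - s) * lam + 2 * (c - lam)),
        inv_mul_cancel_right₀ hdz_ne]
    have hd'eq : d (f z) * d z = (1 - s)^2 := by
      have h : d (f z) = 1 + s - 2*(starRingEnd ℂ) c * inner ℂ v (f z) := rfl
      rw [h]
      linear_combination (-2 * (starRingEnd ℂ) c) * h2' + (1 + s) * hdz_eq + 4 * hsdef
    set L' : ℂ := inner ℂ v (f z) with hL'def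
    set D' : ℂ := d (f z) with hD'def
    clear_value L' D'
    have h1 : D'⁻¹ * (1 - s) * ((d z)⁻¹ * (1 - s)) = 1 := by
      field_simp
      linear_combination (-1 : ℂ) * hd'eq
    have h2 : D'⁻¹ * (1 - s) * ((d z)⁻¹ * (2 * (c - lam)))
        + D'⁻¹ * (2 * (c - L')) = 0 := by
      have hb : (1 - s) * (2 * (c - lam)) + 2 * (c * d z - L' * d z) = 0 := by
        linear_combination (-2 : ℂ) * h2' + (2 * c) * hdz_eq + 4 * lam * hsdef
      have hrw : (2:ℂ) * (c - L') = (d z)⁻¹ * (2 * (c * d z - L' * d z)) := by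
        rw [show (2:ℂ) * (c * d z - L' * d z) = (2 * (c - L')) * d z by ring,
          mul_comm ((d z)⁻¹) _, mul_inv_cancel_right₀ hdz_ne]
      rw [hrw]
      calc D'⁻¹ * (1 - s) * ((d z)⁻¹ * (2 * (c - lam)))
            + D'⁻¹ * ((d z)⁻¹ * (2 * (c * d z - L' * d z)))
          = D'⁻¹ * (d z)⁻¹ * ((1 - s) * (2 * (c - lam)) + 2 * (c * d z - L' * d z)) := by
            ring
        _ = 0 := by rw [hb, mul_zero]
    calc f (f z) = (D'⁻¹ * (1 - s)) • f z + (D'⁻¹ * (2 * (c - L'))) • v := by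
          rw [hexp (f z), ← hD'def, ← hL'def]
      _ = (D'⁻¹ * (1 - s) * ((d z)⁻¹ * (1 - s))) • z
          + ((D'⁻¹ * (1 - s) * ((d z)⁻¹ * (2 * (c - lam)))
              + D'⁻¹ * (2 * (c - L'))) • v) := by
            rw [hexp z, smul_add, smul_smul, smul_smul, add_assoc, ← add_smul]
      _ = z := by rw [h1, h2, one_smul, zero_smul, add_zero]
  -- differentiability
  have hip : Differentiable ℂ (fun w : EuclideanSpace ℂ (Fin n) => (inner ℂ v w : ℂ)) := by
    simpa using (innerSL ℂ v).differentiable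
  have hdiff : DifferentiableOn ℂ f (ball 0 1) := by
    intro z hz
    rw [mem_ball_zero_iff] at hz
    have hdz_ne : d z ≠ 0 := (hdnorm z (hinnerlt z hz)).2
    apply DifferentiableAt.differentiableWithinAt
    have hd : DifferentiableAt ℂ d z := by
      have hD : Differentiable ℂ d := by
        rw [hddef]
        exact (differentiable_const _).sub ((hip.const_mul _))
      exact hD z
    have hnumdiff : DifferentiableAt ℂ
        (fun w : EuclideanSpace ℂ (Fin n) =>
          (1 - s) • w + (2 * (c - inner ℂ v w)) • v) z := by
      apply DifferentiableAt.add
      · exact differentiableAt_id.const_smul (1 - s)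
      · exact (((differentiableAt_const c).sub (hip z)).const_mul 2).smul_const v
    exact (hd.inv hdz_ne).smul hnumdiff
  -- fixed points
  have hfix : ∀ i, f (p i) = p i := by
    intro i
    have hlam : (inner ℂ v (p i) : ℂ) = c := hvp i
    have hd_eq : d (p i) = 1 - s := by
      have h : d (p i) = 1 + s - 2*(starRingEnd ℂ) c * inner ℂ v (p i) := rfl
      rw [h, hlam, hsdef]; ring
    rw [hfdef]
    simp only [hlam, hd_eq, sub_self, mul_zero, zero_smul, add_zero]
    rw [smul_smul, inv_mul_cancel₀ hsne, one_smul]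
  -- non-identity
  have hnontriv : ∃ z ∈ ball (0 : EuclideanSpace ℂ (Fin n)) 1, f z ≠ z := by
    by_cases hc0 : c = 0
    · refine ⟨((2⁻¹ : ℝ) : ℂ) • v, ?_, ?_⟩
      · rw [mem_ball_zero_iff, norm_smul, hv1, mul_one]
        norm_num
      · have hlam : (inner ℂ v (((2⁻¹ : ℝ) : ℂ) • v) : ℂ) = ((2⁻¹ : ℝ) : ℂ) := by
          rw [inner_smul_right, hvv, mul_one]
        have hs0 : s = 0 := by rw [hsdef, hc0]; ring
        have hd_eq : d (((2⁻¹ : ℝ) : ℂ) • v) = 1 := by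
          have h : d (((2⁻¹ : ℝ) : ℂ) • v)
              = 1 + s - 2*(starRingEnd ℂ) c * inner ℂ v (((2⁻¹ : ℝ) : ℂ) • v) := rfl
          rw [h, hs0, hc0]; simp
        have : f (((2⁻¹ : ℝ) : ℂ) • v) = ((-(2⁻¹ : ℝ) : ℝ) : ℂ) • v := by
          rw [hfdef]
          simp only [hlam, hd_eq, hs0, hc0, inv_one, one_smul]
          rw [smul_smul, ← add_smul]
          norm_num
        rw [this]
        intro h
        have h2 : ((((-(2⁻¹ : ℝ)) : ℝ) : ℂ) - ((2⁻¹ : ℝ) : ℂ)) • v = 0 := by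
          rw [sub_smul, h, sub_self]
        have h3 : ((((-(2⁻¹ : ℝ)) : ℝ) : ℂ) - ((2⁻¹ : ℝ) : ℂ)) ≠ 0 := by
          norm_num
        exact hvne ((smul_eq_zero.mp h2).resolve_left h3)
    · refine ⟨0, mem_ball_self one_pos, ?_⟩
      have hlam : (inner ℂ v (0 : EuclideanSpace ℂ (Fin n)) : ℂ) = 0 := inner_zero_right v
      have hd_ne : d 0 ≠ 0 := (hdnorm 0 (by rw [hlam]; norm_num)).2
      have : f 0 = ((d 0)⁻¹ * (2 * c)) • v := by
        rw [hfdef]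
        simp only [hlam, smul_zero, zero_add, sub_zero, smul_smul]
      rw [this]
      intro h
      apply hvne
      have h2 : (d 0)⁻¹ * (2 * c) ≠ 0 := by
        apply mul_ne_zero (inv_ne_zero hd_ne)
        simp [hc0]
      exact (smul_eq_zero.mp h).resolve_left h2
  exact ⟨f, f, hdiff, hdiff, hmapsto, hmapsto, hinv, hinv, hfix, hnontriv⟩
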